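/- The topological subspaces {(x₁, x₂) ∈ ℝ² | x₁ > 0 ∧ x₁*x₂ + x₂^2 > 0} and {(x₁, x₂) ∈ ℝ² | x₁ > 0 ∧ x₁*x₂ - x₂^2 > 0} of ℝ² are not homeomorphic. -/

import Mathlib

/-- The subspaces `S^{(2,0,0)}(A₊) = {x₁ > 0 ∧ x₁x₂ + x₂² > 0}` and
`S^{(2,0,0)}(A₋) = {x₁ > 0 ∧ x₁x₂ - x₂² > 0}` of `ℝ²` are not homeomorphic. -/
theorem posDef_regions_not_homeomorphic :
    ¬ Nonempty
      (({p : ℝ × ℝ | p.1 > 0 ∧ p.1 * p.2 + p.2 ^ 2 > 0} : Set (ℝ × ℝ)) ≃ₜ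
       ({p : ℝ × ℝ | p.1 > 0 ∧ p.1 * p.2 - p.2 ^ 2 > 0} : Set (ℝ × ℝ))) := by
  rintro ⟨h⟩
  set A : Set (ℝ × ℝ) := {p : ℝ × ℝ | p.1 > 0 ∧ p.1 * p.2 + p.2 ^ 2 > 0} with hA
  set B : Set (ℝ × ℝ) := {p : ℝ × ℝ | p.1 > 0 ∧ p.1 * p.2 - p.2 ^ 2 > 0} with hB
  -- B is convex (it equals {0 < p.2 < p.1})
  have hBeq : B = {p : ℝ × ℝ | 0 < p.2} ∩ {p : ℝ × ℝ | p.2 - p.1 < 0} := by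
    ext ⟨x, y⟩
    simp only [hB, Set.mem_setOf_eq, Set.mem_inter_iff, sub_neg]
    constructor
    · rintro ⟨hx, h2⟩
      have hy : 0 < y := by
        by_contra hy
        push_neg at hy
        nlinarith [mul_nonneg hx.le (neg_nonneg.2 hy), sq_nonneg y]
      refine ⟨hy, by nlinarith⟩
    · rintro ⟨hy, hyx⟩
      exact ⟨hy.trans hyx, by nlinarith⟩
  have hBconv : Convex ℝ B := by
    rw [hBeq]
    exact (convex_halfSpace_gt ⟨fun _ _ => rfl, fun _ _ => rfl⟩ 0).inter
      (convex_halfSpace_lt ⟨fun _ _ => by simp [Prod.fst_add, Prod.snd_add]; ring,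
        fun c p => by simp [smul_sub]; ring⟩ 0)
  -- B is preconnected, hence so is A via the homeomorphism
  have hBpre : IsPreconnected B := hBconv.isPreconnected
  have hBne : B.Nonempty := ⟨(2, 1), by norm_num [hB]⟩
  have : ConnectedSpace B := Subtype.connectedSpace ⟨hBne, hBpre⟩
  have hApre : IsPreconnected A := by
    have hcont : Continuous ((Subtype.val : A → ℝ × ℝ) ∘ h.symm) :=
      continuous_subtype_val.comp h.symm.continuous
    have himg := (isPreconnected_univ (α := B)).image _ hcont.continuousOn
    have : ((Subtype.val : A → ℝ × ℝ) ∘ h.symm) '' Set.univ = A := by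
      rw [Set.image_univ, Set.range_comp, h.symm.surjective.range_eq, Set.image_univ,
        Subtype.range_coe]
    rwa [this] at himg
  -- But A is disconnected: separated by {p.2 > 0} and {p.2 < 0}
  have hU : IsOpen {p : ℝ × ℝ | 0 < p.2} := isOpen_lt continuous_const continuous_snd
  have hV : IsOpen {p : ℝ × ℝ | p.2 < 0} := isOpen_lt continuous_snd continuous_const
  have hcover : A ⊆ {p : ℝ × ℝ | 0 < p.2} ∪ {p : ℝ × ℝ | p.2 < 0} := by
    rintro ⟨x, y⟩ ⟨hx, hxy⟩
    rcases lt_trichotomy y 0 with h' | h' | h'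
    · exact Or.inr h'
    · exfalso; rw [h'] at hxy; simp at hxy
    · exact Or.inl h'
  have h1 : (A ∩ {p : ℝ × ℝ | 0 < p.2}).Nonempty := ⟨(1, 1), by norm_num [hA]⟩
  have h2 : (A ∩ {p : ℝ × ℝ | p.2 < 0}).Nonempty := ⟨(1, -2), by norm_num [hA]⟩
  obtain ⟨p, _, hp1, hp2⟩ := hApre _ _ hU hV hcover h1 h2
  simp only [Set.mem_setOf_eq] at hp1 hp2
  linarith
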